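/- Let w : ℝⁿ → ℝ be a differentiable strictly convex function such that 0 lies in the interior of the closure of the gradient image ∇w(ℝⁿ). Then w is bounded from below and attains its minimal value at a unique point. -/

import Mathlib

open scoped RealInnerProductSpace
open MeasureTheory

section aux

variable {E : Type*} [NormedAddCommGroup E] [InnerProductSpace ℝ E] [CompleteSpace E]

/-- Subgradient inequality for differentiable convex functions. -/
lemma grad_ineq_aux {w : E → ℝ} (hdiff : Differentiable ℝ w)
    (hconv : ConvexOn ℝ Set.univ w) (x y : E) :
    w x + ⟪gradient w x, y - x⟫ ≤ w y := by
  set g : ℝ → ℝ := fun t => w (t • (y - x) + x) with hg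
  have hgc : ConvexOn ℝ Set.univ g := by
    simpa [hg, Function.comp_def, AffineMap.lineMap_apply] using
      hconv.comp_affineMap (AffineMap.lineMap x y)
  have hline : HasDerivAt (fun t : ℝ => t • (y - x) + x) (y - x) 0 := by
    simpa using ((hasDerivAt_id (0:ℝ)).smul_const (y - x)).add_const x
  have hgrad : HasFDerivAt w (InnerProductSpace.toDual ℝ E (gradient w x)) x :=
    (hdiff x).hasGradientAt
  have hgd : HasDerivAt g (⟪gradient w x, y - x⟫) 0 := by
    have hgrad' : HasFDerivAt w (InnerProductSpace.toDual ℝ E (gradient w x))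
        ((0:ℝ) • (y - x) + x) := by simpa using hgrad
    simpa [InnerProductSpace.toDual_apply_apply, Function.comp_def, hg] using hgrad'.comp_hasDerivAt 0 hline
  have := hgc.le_slope_of_hasDerivAt (Set.mem_univ (0:ℝ)) (Set.mem_univ (1:ℝ))
    one_pos hgd
  have hslope : slope g 0 1 = w y - w x := by
    simp [slope_def_field, hg]
  rw [hslope] at this
  linarith

end aux

theorem stmt7 {n : ℕ} (w : EuclideanSpace ℝ (Fin n) → ℝ)
    (hdiff : Differentiable ℝ w)
    (hconv : StrictConvexOn ℝ Set.univ w)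
    (hzero : (0 : EuclideanSpace ℝ (Fin n)) ∈
      interior (closure (Set.range (gradient w)))) :
    BddBelow (Set.range w) ∧ ∃! x, ∀ y, w x ≤ w y := by
  classical
  have hcw : ConvexOn ℝ Set.univ w := hconv.convexOn
  have hgi := grad_ineq_aux hdiff hcw
  -- get ε
  obtain ⟨ε, hε, hball⟩ := Metric.isOpen_iff.1 isOpen_interior 0 hzero
  have hball' : Metric.ball (0:EuclideanSpace ℝ (Fin n)) ε ⊆ closure (Set.range (gradient w)) :=
    hball.trans interior_subset
  -- for each unit vector pick a good gradient point
  have key : ∀ u : (Metric.sphere (0:EuclideanSpace ℝ (Fin n)) 1), ∃ y : EuclideanSpace ℝ (Fin n),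
      3 * ε / 8 < ⟪gradient w y, (u : EuclideanSpace ℝ (Fin n))⟫ := by
    rintro ⟨u, hu⟩
    rw [mem_sphere_zero_iff_norm] at hu
    have hmem : (ε/2) • u ∈ closure (Set.range (gradient w)) := by
      apply hball'
      rw [Metric.mem_ball, dist_zero_right, norm_smul, hu]
      simp only [mul_one]
      rw [Real.norm_eq_abs, abs_of_pos (by linarith)]
      linarith
    rw [Metric.mem_closure_iff] at hmem
    obtain ⟨g, ⟨y, rfl⟩, hgy⟩ := hmem ((ε/8)) (by linarith)
    refine ⟨y, ?_⟩
    show 3 * ε / 8 < ⟪gradient w y, u⟫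
    have h1 : ⟪(ε/2) • u - gradient w y, u⟫ < ε/8 := by
      calc ⟪(ε/2) • u - gradient w y, u⟫ ≤ ‖(ε/2) • u - gradient w y‖ * ‖u‖ :=
            real_inner_le_norm _ _
        _ < ε/8 := by
            rw [hu, mul_one]
            rw [dist_eq_norm] at hgy
            linarith
    have h2 : ⟪(ε/2) • u, u⟫ = ε/2 := by
      rw [real_inner_smul_left, real_inner_self_eq_norm_sq, hu]; ring
    have h3 : ⟪(ε/2) • u - gradient w y, u⟫ = ε/2 - ⟪gradient w y, u⟫ := by
      rw [inner_sub_left, h2]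
    linarith [h3 ▸ h1]
  choose Y hY using key
  -- open cover of the sphere
  set U : (Metric.sphere (0:EuclideanSpace ℝ (Fin n)) 1) → Set (EuclideanSpace ℝ (Fin n)) :=
    fun i => {u | ε/4 < ⟪gradient w (Y i), u⟫} with hU
  have hUopen : ∀ i, IsOpen (U i) := fun i =>
    isOpen_lt continuous_const ((innerSL ℝ (gradient w (Y i))).continuous)
  have hcover : Metric.sphere (0:EuclideanSpace ℝ (Fin n)) 1 ⊆ ⋃ i, U i := by
    intro u hu
    exact Set.mem_iUnion.2 ⟨⟨u, hu⟩, by simpa [hU] using lt_trans (by linarith) (hY ⟨u, hu⟩)⟩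
  obtain ⟨t, ht⟩ := (isCompact_sphere (0:EuclideanSpace ℝ (Fin n)) 1).elim_finite_subcover U hUopen hcover
  -- uniform bound
  obtain ⟨B, hB⟩ := ((t.image (fun i => ⟪gradient w (Y i), (Y i : EuclideanSpace ℝ (Fin n))⟫ - w (Y i))).exists_le)
  -- sublevel set is bounded
  set R : ℝ := max 0 ((w 0 + B) * (8/ε)) with hR
  have hsub : ∀ x : EuclideanSpace ℝ (Fin n), w x ≤ w 0 → ‖x‖ ≤ R := by
    intro x hx
    rcases eq_or_ne x 0 with rfl | hx0
    · simp [hR]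
    have hxn : (0:ℝ) < ‖x‖ := norm_pos_iff.2 hx0
    have hu : ‖x‖⁻¹ • x ∈ Metric.sphere (0:EuclideanSpace ℝ (Fin n)) 1 := by
      rw [mem_sphere_zero_iff_norm, norm_smul, norm_inv, norm_norm]
      field_simp
    obtain ⟨i, hit, hiu⟩ := Set.mem_iUnion₂.1 (ht hu)
    have hinner : ε/4 < ⟪gradient w (Y i), ‖x‖⁻¹ • x⟫ := hiu
    have hinner' : (ε/4) * ‖x‖ ≤ ⟪gradient w (Y i), x⟫ := by
      have : ⟪gradient w (Y i), ‖x‖⁻¹ • x⟫ = ‖x‖⁻¹ * ⟪gradient w (Y i), x⟫ := by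
        rw [real_inner_smul_right]
      rw [this] at hinner
      have := (mul_lt_mul_of_pos_left hinner hxn).le
      rw [mul_comm (ε/4)] at *
      calc ‖x‖ * (ε/4) ≤ ‖x‖ * (‖x‖⁻¹ * ⟪gradient w (Y i), x⟫) := this
        _ = ⟪gradient w (Y i), x⟫ := by field_simp
    have hBi : ⟪gradient w (Y i), (Y i : EuclideanSpace ℝ (Fin n))⟫ - w (Y i) ≤ B :=
      hB _ (Finset.mem_image_of_mem _ hit)
    have hlow := hgi (Y i) x
    rw [inner_sub_right] at hlow
    -- w (Y i) + ⟪∇, x⟫ - ⟪∇, Y i⟫ ≤ w x ≤ w 0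
    have h4 : (ε/4) * ‖x‖ ≤ w 0 + B := by linarith
    have h5 : ‖x‖ ≤ (w 0 + B) * (8/ε) := by
      have h8 : (0:ℝ) < 8/ε := by positivity
      have hm := mul_le_mul_of_nonneg_right h4 h8.le
      have heq : (ε/4 * ‖x‖) * (8/ε) = 2 * ‖x‖ := by field_simp; ring
      rw [heq] at hm
      linarith
    exact le_max_of_le_right h5
  -- minimum on the compact ball
  have hRnn : (0:ℝ) ≤ R := le_max_left _ _
  obtain ⟨x₀, hx₀K, hx₀min⟩ := (isCompact_closedBall (0:EuclideanSpace ℝ (Fin n)) R).exists_isMinOn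
    ⟨0, Metric.mem_closedBall_self hRnn⟩ hdiff.continuous.continuousOn
  have hx₀0 : w x₀ ≤ w 0 := hx₀min (Metric.mem_closedBall_self hRnn)
  have hglobal : ∀ y, w x₀ ≤ w y := by
    intro y
    by_cases hy : w y ≤ w 0
    · exact hx₀min (Metric.mem_closedBall.2 (by simpa [dist_zero_right] using hsub y hy))
    · linarith [not_le.1 hy]
  refine ⟨⟨w x₀, by rintro _ ⟨y, rfl⟩; exact hglobal y⟩, x₀, hglobal, ?_⟩
  intro z hz
  by_contra hne
  have hzx : w z = w x₀ := le_antisymm (hz x₀) (hglobal z)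
  have := hconv.2 (Set.mem_univ z) (Set.mem_univ x₀) hne
    (by norm_num : (0:ℝ) < 1/2) (by norm_num : (0:ℝ) < 1/2) (by norm_num)
  have hc := hz ((1/2 : ℝ) • z + (1/2 : ℝ) • x₀)
  rw [hzx] at this
  simp only [smul_eq_mul] at this
  linarith
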